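/- Let X be a locally compact metric space, f : X → ℝⁿ a continuous map, and y₀ ∈ ℝⁿ such that the fiber f⁻¹{y₀} is totally disconnected. Let x₀ ∈ f⁻¹{y₀} and suppose ε₁ > 0 is such that the closure of U_{ε₁}(x₀) is compact and contained in X. Then ⋂_{0 < ε ≤ ε₁} closure(U_ε(x₀)) = {x₀}. -/
import Mathlib

open Set

/-- The intersection of a directed family of nonempty compact preconnected closed sets
in a T2 space is preconnected. -/
lemma isPreconnected_iInter_of_directed' {X ι : Type*} [TopologicalSpace X] [T2Space X]
    [Nonempty ι] (K : ι → Set X) (hd : Directed (· ⊇ ·) K) (hc : ∀ i, IsCompact (K i))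
    (hcl : ∀ i, IsClosed (K i)) (hconn : ∀ i, IsPreconnected (K i)) :
    IsPreconnected (⋂ i, K i) := by
  have hKcl : IsClosed (⋂ i, K i) := isClosed_iInter hcl
  rw [isPreconnected_iff_subset_of_fully_disjoint_closed hKcl]
  intro u v hu hv hsub hdisj
  have hA : IsCompact ((⋂ i, K i) ∩ u) :=
    ((hc (Classical.arbitrary ι)).of_isClosed_subset (hKcl.inter hu)
      (inter_subset_left.trans (iInter_subset _ _)))
  have hB : IsCompact ((⋂ i, K i) ∩ v) :=
    ((hc (Classical.arbitrary ι)).of_isClosed_subset (hKcl.inter hv)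
      (inter_subset_left.trans (iInter_subset _ _)))
  obtain ⟨U, V, hU, hV, hAU, hBV, hUV⟩ :=
    SeparatedNhds.of_isCompact_isCompact hA hB
      (hdisj.mono inter_subset_right inter_subset_right)
  -- some K i is contained in U ∪ V
  have hex : ∃ i, K i ⊆ U ∪ V := by
    by_contra hcon
    push_neg at hcon
    have hne : ∀ i, (K i \ (U ∪ V)).Nonempty := fun i =>
      diff_nonempty.mpr (hcon i)
    have hdir : Directed (· ⊇ ·) fun i => K i \ (U ∪ V) := fun i j => by
      obtain ⟨k, hk1, hk2⟩ := hd i j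
      exact ⟨k, diff_subset_diff_left hk1, diff_subset_diff_left hk2⟩
    have := IsCompact.nonempty_iInter_of_directed_nonempty_isCompact_isClosed
      (fun i => K i \ (U ∪ V)) hdir hne
      (fun i => (hc i).of_isClosed_subset ((hcl i).sdiff (hU.union hV)) diff_subset)
      (fun i => (hcl i).sdiff (hU.union hV))
    obtain ⟨x, hx⟩ := this
    simp only [mem_iInter, mem_diff] at hx
    have hxK : x ∈ ⋂ i, K i := mem_iInter.mpr fun i => (hx i).1
    have := hsub hxK
    rcases this with h | h
    · exact (hx (Classical.arbitrary ι)).2 (Or.inl (hAU ⟨hxK, h⟩))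
    · exact (hx (Classical.arbitrary ι)).2 (Or.inr (hBV ⟨hxK, h⟩))
  obtain ⟨i, hi⟩ := hex
  rcases (hconn i).subset_or_subset hU hV hUV hi with h | h
  · left
    intro x hx
    rcases hsub hx with h' | h'
    · exact h'
    · exact absurd (hBV ⟨hx, h'⟩)
        (fun hxV => hUV.ne_of_mem (h ((iInter_subset K i) hx)) hxV rfl)
  · right
    intro x hx
    rcases hsub hx with h' | h'
    · exact absurd (hAU ⟨hx, h'⟩)
        (fun hxU => hUV.ne_of_mem hxU (h ((iInter_subset K i) hx)) rfl)
    · exact h'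

/-- Under the hypotheses of the compact-closure corollary, the closures of the components
`U_ε(x₀)` of `x₀` in `f⁻¹(B(y₀, ε))` shrink to `{x₀}` as `ε → 0⁺`. -/
theorem stmt_9 {X : Type*} [MetricSpace X] [LocallyCompactSpace X]
    (n : ℕ) (f : X → EuclideanSpace ℝ (Fin n)) (hf : Continuous f)
    (y₀ : EuclideanSpace ℝ (Fin n))
    (hfiber : IsTotallyDisconnected (f ⁻¹' {y₀}))
    (x₀ : X) (hx₀ : f x₀ = y₀) (ε₁ : ℝ) (hε₁ : 0 < ε₁)
    (hcpt : IsCompact (closure (connectedComponentIn (f ⁻¹' Metric.ball y₀ ε₁) x₀))) :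
    ⋂ ε ∈ Set.Ioc (0 : ℝ) ε₁,
        closure (connectedComponentIn (f ⁻¹' Metric.ball y₀ ε) x₀) = {x₀} := by
  set C : ℝ → Set X := fun ε => closure (connectedComponentIn (f ⁻¹' Metric.ball y₀ ε) x₀)
    with hC
  have hx₀mem : ∀ ε ∈ Set.Ioc (0 : ℝ) ε₁, x₀ ∈ connectedComponentIn (f ⁻¹' Metric.ball y₀ ε) x₀ := by
    intro ε hε
    apply mem_connectedComponentIn
    simp [hx₀, hε.1]
  have hmono : ∀ ε ε' : ℝ, ε ≤ ε' → C ε ⊆ C ε' := fun ε ε' h =>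
    closure_mono (connectedComponentIn_mono _ (preimage_mono (Metric.ball_subset_ball h)))
  have hcomp : ∀ ε ∈ Set.Ioc (0 : ℝ) ε₁, IsCompact (C ε) := fun ε hε =>
    hcpt.of_isClosed_subset isClosed_closure (hmono ε ε₁ hε.2)
  have hconn : ∀ ε : ℝ, IsPreconnected (C ε) := fun ε =>
    (isPreconnected_connectedComponentIn).closure
  -- the intersection, as an iInter over the subtype
  have : Nonempty (Set.Ioc (0 : ℝ) ε₁) := ⟨⟨ε₁, hε₁, le_refl ε₁⟩⟩
  have hKeq : ⋂ ε ∈ Set.Ioc (0 : ℝ) ε₁, C ε = ⋂ ε : Set.Ioc (0 : ℝ) ε₁, C ε := by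
    rw [iInter_subtype]
  have hdir : Directed (· ⊇ ·) fun ε : Set.Ioc (0 : ℝ) ε₁ => C ε := by
    rintro ⟨a, ha⟩ ⟨b, hb⟩
    refine ⟨⟨min a b, lt_min ha.1 hb.1, (min_le_left a b).trans ha.2⟩, ?_, ?_⟩
    · exact hmono _ _ (min_le_left a b)
    · exact hmono _ _ (min_le_right a b)
  have hKpre : IsPreconnected (⋂ ε ∈ Set.Ioc (0 : ℝ) ε₁, C ε) := by
    rw [hKeq]
    exact isPreconnected_iInter_of_directed' _ hdir
      (fun ε => hcomp ε ε.2) (fun _ => isClosed_closure) (fun ε => hconn ε)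
  -- the intersection lies in the fiber
  have hKfib : (⋂ ε ∈ Set.Ioc (0 : ℝ) ε₁, C ε) ⊆ f ⁻¹' {y₀} := by
    intro x hx
    simp only [mem_iInter] at hx
    have hdist : ∀ ε : ℝ, 0 < ε → dist (f x) y₀ ≤ ε := by
      intro ε hε
      have hmem : x ∈ C (min ε ε₁) :=
        hx (min ε ε₁) ⟨lt_min hε hε₁, min_le_right _ _⟩
      have hsub : C (min ε ε₁) ⊆ f ⁻¹' Metric.closedBall y₀ (min ε ε₁) := by
        apply closure_minimal
        · exact (connectedComponentIn_subset _ _).trans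
            (preimage_mono Metric.ball_subset_closedBall)
        · exact (Metric.isClosed_closedBall).preimage hf
      have : dist (f x) y₀ ≤ min ε ε₁ := by
        simpa [Metric.mem_closedBall] using hsub hmem
      exact this.trans (min_le_left _ _)
    have : dist (f x) y₀ ≤ 0 := le_of_forall_pos_le_add (by simpa using hdist)
    simpa [mem_preimage, ← dist_le_zero] using this
  -- conclude
  have hsub : (⋂ ε ∈ Set.Ioc (0 : ℝ) ε₁, C ε).Subsingleton :=
    hfiber _ hKfib hKpre
  apply Set.eq_singleton_iff_unique_mem.mpr
  constructor
  · exact mem_iInter₂.mpr fun ε hε => subset_closure (hx₀mem ε hε)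
  · intro x hx
    exact hsub hx (mem_iInter₂.mpr fun ε hε => subset_closure (hx₀mem ε hε))
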